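/- For the Oracle Langevin iteration in the Gaussian case (score given by the true inverse covariance Σ_x⁻¹, no noise added to data), the stationary covariance is Σ* = Σ_x (I − (μ/2) Σ_x⁻¹)⁻¹ = Σ_x + (μ/2) I + O(μ²), matching the bias of the noise-corrected algorithm up to O(μ²). -/

import Mathlib

open scoped Matrix.Norms.L2Operator

lemma l2_norm_one_le (k : ℕ) : ‖(1 : Matrix (Fin k) (Fin k) ℝ)‖ ≤ 1 := by
  rw [Matrix.cstar_norm_def, map_one]
  exact ContinuousLinearMap.norm_id_le

/-- Oracle Langevin in the Gaussian case: the stationary covariance is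
Σ_x(I − (μ/2)Σ_x⁻¹)⁻¹ and equals Σ_x + (μ/2)I + O(μ²). -/
theorem oracle_langevin_gaussian_bias (k : ℕ)
    (Sx : Matrix (Fin k) (Fin k) ℝ) (hS : Sx.PosDef) :
    ∃ C > 0, ∃ μ₀ > 0, ∀ μ : ℝ, 0 < μ → μ < μ₀ →
      ((1 - μ • Sx⁻¹) * (Sx * (1 - (μ / 2) • Sx⁻¹)⁻¹) * (1 - μ • Sx⁻¹)
          + (2 * μ) • 1 = Sx * (1 - (μ / 2) • Sx⁻¹)⁻¹) ∧
      ‖Sx * (1 - (μ / 2) • Sx⁻¹)⁻¹ - Sx - (μ / 2) • 1‖ ≤ C * μ ^ 2 := by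
  classical
  set A := Sx⁻¹ with hAdef
  have hdet : IsUnit Sx.det := isUnit_iff_ne_zero.mpr (ne_of_gt hS.det_pos)
  have h1 : Sx * A = 1 := Matrix.mul_nonsing_inv _ hdet
  have h2 : A * Sx = 1 := Matrix.nonsing_inv_mul _ hdet
  set κ := ‖A‖ with hκdef
  have hκ : 0 ≤ κ := norm_nonneg _
  refine ⟨κ + 1, by positivity, 1 / (κ + 1), by positivity, ?_⟩
  intro μ hμ hμ'
  have hμκ : μ * κ < 1 := by
    rw [lt_div_iff₀ (by positivity : (0:ℝ) < κ + 1)] at hμ'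
    nlinarith
  set B := (1 : Matrix (Fin k) (Fin k) ℝ) - (μ / 2) • A with hBdef
  have htlt : ‖(μ / 2) • A‖ < 1 := by
    rw [norm_smul, Real.norm_eq_abs, abs_of_pos (by positivity)]
    nlinarith
  have hu : IsUnit B := (Units.oneSub _ htlt).isUnit
  have hdetB : IsUnit B.det := (Matrix.isUnit_iff_isUnit_det _).mp hu
  have h3 : B * B⁻¹ = 1 := Matrix.mul_nonsing_inv _ hdetB
  have h4 : B⁻¹ * B = 1 := Matrix.nonsing_inv_mul _ hdetB
  have hAB : A * B = B * A := by
    simp only [hBdef, mul_sub, sub_mul, mul_one, one_mul, mul_smul_comm, smul_mul_assoc]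
  have hABi : A * B⁻¹ = B⁻¹ * A := by
    calc A * B⁻¹ = B⁻¹ * (B * (A * B⁻¹)) := by rw [← mul_assoc, h4, one_mul]
    _ = B⁻¹ * ((B * A) * B⁻¹) := by rw [mul_assoc]
    _ = B⁻¹ * ((A * B) * B⁻¹) := by rw [hAB]
    _ = B⁻¹ * (A * (B * B⁻¹)) := by rw [mul_assoc]
    _ = B⁻¹ * A := by rw [h3, mul_one]
  have h1mB : (1 : Matrix (Fin k) (Fin k) ℝ) - B = (μ / 2) • A := by
    rw [hBdef]; abel
  -- fixed point equation
  have heq : (1 - μ • A) * (Sx * B⁻¹) * (1 - μ • A) + (2 * μ) • 1 = Sx * B⁻¹ := by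
    have cancel : ∀ X Y : Matrix (Fin k) (Fin k) ℝ, X * B = Y * B → X = Y := by
      intro X Y h
      calc X = X * (B * B⁻¹) := by rw [h3, mul_one]
      _ = (X * B) * B⁻¹ := by rw [mul_assoc]
      _ = (Y * B) * B⁻¹ := by rw [h]
      _ = Y := by rw [mul_assoc, h3, mul_one]
    apply cancel
    have hMB : (1 - μ • A) * B = B * (1 - μ • A) := by
      simp only [mul_sub, sub_mul, mul_one, one_mul, mul_smul_comm, smul_mul_assoc, hAB]
    calc ((1 - μ • A) * (Sx * B⁻¹) * (1 - μ • A) + (2 * μ) • 1) * B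
        = (1 - μ • A) * (Sx * B⁻¹) * ((1 - μ • A) * B) + (2 * μ) • B := by
          simp only [add_mul, smul_mul_assoc, one_mul, mul_assoc]
      _ = (1 - μ • A) * Sx * (1 - μ • A) + (2 * μ) • B := by
          rw [hMB, ← mul_assoc, mul_assoc (1 - μ • A) (Sx * B⁻¹) B,
            mul_assoc Sx B⁻¹ B, h4, mul_one]
      _ = Sx * B⁻¹ * B := by
          rw [mul_assoc Sx B⁻¹ B, h4, mul_one, hBdef]
          simp only [mul_sub, sub_mul, mul_one, one_mul, mul_smul_comm, smul_mul_assoc,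
            smul_sub, smul_smul, h1, h2, smul_add]
          module
  refine ⟨heq, ?_⟩
  -- difference identity
  have e1 : Sx * B⁻¹ - Sx = (μ / 2) • B⁻¹ := by
    have : Sx * B⁻¹ - Sx = Sx * B⁻¹ * (1 - B) := by
      rw [mul_sub, mul_one, mul_assoc, h4, mul_one]
    rw [this]
    have h1B : Sx * B⁻¹ * ((μ / 2) • A) = (μ / 2) • B⁻¹ := by
      rw [mul_smul_comm, mul_assoc, ← hABi, ← mul_assoc, h1, one_mul]
    rw [h1mB]; exact h1B
  have e2 : B⁻¹ - 1 = (μ / 2) • (B⁻¹ * A) := by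
    have : B⁻¹ - 1 = B⁻¹ * (1 - B) := by rw [mul_sub, mul_one, h4]
    rw [this]
    rw [h1mB, mul_smul_comm]
  have key : Sx * B⁻¹ - Sx - (μ / 2) • 1 = (μ ^ 2 / 4) • (B⁻¹ * A) := by
    calc Sx * B⁻¹ - Sx - (μ / 2) • 1 = (μ / 2) • B⁻¹ - (μ / 2) • 1 := by rw [e1]
    _ = (μ / 2) • (B⁻¹ - 1) := by rw [smul_sub]
    _ = (μ / 2) • ((μ / 2) • (B⁻¹ * A)) := by rw [e2]
    _ = (μ ^ 2 / 4) • (B⁻¹ * A) := by rw [smul_smul]; congr 1; ring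
  -- norm bound on B⁻¹
  have eB : B⁻¹ = 1 + (μ / 2) • (A * B⁻¹) := by
    have : B * B⁻¹ = B⁻¹ - (μ / 2) • (A * B⁻¹) := by
      rw [hBdef, sub_mul, one_mul, smul_mul_assoc]
    have hh := h3
    rw [this] at hh
    rw [← hh]; abel
  have hBinv : ‖B⁻¹‖ ≤ 2 := by
    have h5 : ‖B⁻¹‖ ≤ 1 + (μ / 2) * (κ * ‖B⁻¹‖) := by
      calc ‖B⁻¹‖ = ‖1 + (μ / 2) • (A * B⁻¹)‖ := by rw [← eB]
      _ ≤ ‖(1 : Matrix (Fin k) (Fin k) ℝ)‖ + ‖(μ / 2) • (A * B⁻¹)‖ := norm_add_le _ _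
      _ ≤ 1 + (μ / 2) * (κ * ‖B⁻¹‖) := by
          gcongr
          · exact l2_norm_one_le k
          · rw [norm_smul, Real.norm_eq_abs, abs_of_pos (by positivity)]
            gcongr
            exact norm_mul_le _ _
    nlinarith [norm_nonneg (B⁻¹ : Matrix (Fin k) (Fin k) ℝ)]
  rw [key, norm_smul, Real.norm_eq_abs, abs_of_pos (by positivity)]
  have : ‖B⁻¹ * A‖ ≤ 2 * κ := by
    calc ‖B⁻¹ * A‖ ≤ ‖B⁻¹‖ * κ := norm_mul_le _ _
    _ ≤ 2 * κ := by gcongr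
  nlinarith [norm_nonneg (B⁻¹ * A)]
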